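/- Let G be a finite abelian group, let G₁, G₂ ≤ G be subgroups of equal order D, and let F: G₁ × G₂ → ℂˣ be a pairing. Define f: G × G → ℂ by f(μ,ν) = D⁻¹·F(μ,ν) if μ ∈ G₁ and ν ∈ G₂, and f(μ,ν) = 0 otherwise. Then the following four conditions hold simultaneously: (i) for all μ₁, μ₂, ν ∈ G, Σ_{(ν₁,ν₂)∈G×G, ν₁+ν₂=ν} f(μ₁,ν₁)·f(μ₂,ν₂) = f(μ₁,ν) if μ₁ = μ₂ and = 0 otherwise; (ii) for all ν₁, ν₂, μ ∈ G, Σ_{(μ₁,μ₂)∈G×G, μ₁+μ₂=μ} f(μ₁,ν₁)·f(μ₂,ν₂) = f(μ,ν₁) if ν₁ = ν₂ and = 0 otherwise; (iii) for all ν ∈ G, Σ_{μ∈G} f(μ,ν) = 1 if ν = 0 and = 0 otherwise; (iv) for all μ ∈ G, Σ_{ν∈G} f(μ,ν) = 1 if μ = 0 and = 0 otherwise; if and only if F is a perfect pairing. -/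

import Mathlib

open Finset

lemma charSum {G : Type*} [AddCommGroup G] [Fintype G] [DecidableEq G]
    (H : AddSubgroup G) [DecidablePred (· ∈ H)] (χ : G → ℂˣ)
    (hχ : ∀ a b, a ∈ H → b ∈ H → χ (a + b) = χ a * χ b) :
    ∑ μ : G, (if μ ∈ H then (χ μ : ℂ) else 0) =
      if ∀ μ ∈ H, χ μ = 1 then (Nat.card H : ℂ) else 0 := by
  by_cases h : ∀ μ ∈ H, χ μ = 1
  · rw [if_pos h]
    have : ∀ μ : G, (if μ ∈ H then (χ μ : ℂ) else 0) = if μ ∈ H then 1 else 0 := by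
      intro μ; by_cases hμ : μ ∈ H
      · simp [hμ, h μ hμ]
      · simp [hμ]
    rw [Fintype.sum_congr _ _ this]
    simp [Finset.sum_ite_mem, Nat.card_eq_fintype_card, Fintype.card_subtype]
  · rw [if_neg h]
    push_neg at h
    obtain ⟨μ₀, hμ₀, hχ₀⟩ := h
    set S := ∑ μ : G, (if μ ∈ H then (χ μ : ℂ) else 0) with hS
    have key : (χ μ₀ : ℂ) * S = S := by
      rw [hS, Finset.mul_sum]
      have e1 : ∀ μ : G, (χ μ₀ : ℂ) * (if μ ∈ H then (χ μ : ℂ) else 0)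
          = if μ ∈ H then (χ (μ₀ + μ) : ℂ) else 0 := by
        intro μ; by_cases hμ : μ ∈ H
        · simp [hμ, hχ μ₀ μ hμ₀ hμ]
        · simp [hμ]
      rw [Fintype.sum_congr _ _ e1]
      exact Fintype.sum_equiv (Equiv.addLeft μ₀) _ _ (fun μ => by
        simp [AddSubgroup.add_mem_cancel_left H hμ₀])
    have hne : (χ μ₀ : ℂ) ≠ 1 := fun hh => hχ₀ (Units.ext hh)
    have : ((χ μ₀ : ℂ) - 1) * S = 0 := by linear_combination key
    rcases mul_eq_zero.mp this with h' | h'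
    · exact absurd (by rwa [sub_eq_zero] at h') hne
    · exact h'

lemma pairSum {G : Type*} [AddCommGroup G] [Fintype G] [DecidableEq G]
    (g : G → G → ℂ) (ν : G) :
    ∑ p ∈ univ.filter (fun p : G × G => p.1 + p.2 = ν), g p.1 p.2
      = ∑ x : G, g x (ν - x) := by
  rw [Finset.sum_filter, Fintype.sum_prod_type]
  refine Fintype.sum_congr _ _ (fun x => ?_)
  have : ∀ y : G, (if x + y = ν then g x y else 0) = if y = ν - x then g x y else 0 := by
    intro y; congr 1; simp [eq_sub_iff_add_eq']
  rw [Fintype.sum_congr _ _ this, Finset.sum_ite_eq' univ (ν - x)]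
  simp

/-- The four quasitriangularity equations for the `R₀`-matrix
coefficient function `f` built from a pairing `F : G₁ × G₂ → ℂˣ` hold
simultaneously iff `F` is a perfect pairing. -/
theorem stmt0 {G : Type*} [AddCommGroup G] [Fintype G] [DecidableEq G]
    (G₁ G₂ : AddSubgroup G) [DecidablePred (· ∈ G₁)] [DecidablePred (· ∈ G₂)]
    (D : ℕ) (hD1 : Nat.card G₁ = D) (hD2 : Nat.card G₂ = D)
    (F : G → G → ℂˣ)
    (hF1 : ∀ μ μ' ν : G, μ ∈ G₁ → μ' ∈ G₁ → ν ∈ G₂ →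
      F (μ + μ') ν = F μ ν * F μ' ν)
    (hF2 : ∀ μ ν ν' : G, μ ∈ G₁ → ν ∈ G₂ → ν' ∈ G₂ →
      F μ (ν + ν') = F μ ν * F μ ν')
    (f : G → G → ℂ)
    (hf : ∀ μ ν : G, f μ ν =
      if μ ∈ G₁ ∧ ν ∈ G₂ then ((D : ℂ))⁻¹ * (F μ ν : ℂ) else 0) :
    ((∀ μ₁ μ₂ ν : G,
        ∑ p ∈ univ.filter (fun p : G × G => p.1 + p.2 = ν),
          f μ₁ p.1 * f μ₂ p.2 = if μ₁ = μ₂ then f μ₁ ν else 0) ∧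
     (∀ ν₁ ν₂ μ : G,
        ∑ p ∈ univ.filter (fun p : G × G => p.1 + p.2 = μ),
          f p.1 ν₁ * f p.2 ν₂ = if ν₁ = ν₂ then f μ ν₁ else 0) ∧
     (∀ ν : G, ∑ μ : G, f μ ν = if ν = 0 then 1 else 0) ∧
     (∀ μ : G, ∑ ν : G, f μ ν = if μ = 0 then 1 else 0)) ↔
    ((∀ μ ∈ G₁, (∀ ν ∈ G₂, F μ ν = 1) → μ = 0) ∧
     (∀ ν ∈ G₂, (∀ μ ∈ G₁, F μ ν = 1) → ν = 0)) := by
  have hD0 : (D : ℂ) ≠ 0 := by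
    have : 0 < Nat.card G₁ := Nat.card_pos
    rw [hD1] at this
    exact_mod_cast this.ne'
  -- F μ 0 = 1 and F 0 ν = 1
  have hF0l : ∀ μ ∈ G₁, F μ 0 = 1 := by
    intro μ hμ
    have := hF2 μ 0 0 hμ G₂.zero_mem G₂.zero_mem
    rw [add_zero] at this
    exact (right_eq_mul.mp this)
  have hF0r : ∀ ν ∈ G₂, F 0 ν = 1 := by
    intro ν hν
    have := hF1 0 0 ν G₁.zero_mem G₁.zero_mem hν
    rw [add_zero] at this
    exact (right_eq_mul.mp this)
  -- character sums
  have sumRow : ∀ μ ∈ G₁, ∑ x : G, (if x ∈ G₂ then (F μ x : ℂ) else 0)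
      = if ∀ x ∈ G₂, F μ x = 1 then (D : ℂ) else 0 := by
    intro μ hμ
    rw [charSum G₂ (F μ) (fun a b ha hb => hF2 μ a b hμ ha hb), hD2]
  have sumCol : ∀ ν ∈ G₂, ∑ x : G, (if x ∈ G₁ then (F x ν : ℂ) else 0)
      = if ∀ x ∈ G₁, F x ν = 1 then (D : ℂ) else 0 := by
    intro ν hν
    rw [charSum G₁ (fun μ => F μ ν) (fun a b ha hb => hF1 a b ν ha hb hν), hD1]
  -- row/column sums of f
  have rowf : ∀ μ ∈ G₁, ∑ ν : G, f μ ν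
      = (D : ℂ)⁻¹ * (if ∀ ν ∈ G₂, F μ ν = 1 then (D : ℂ) else 0) := by
    intro μ hμ
    have : ∀ ν : G, f μ ν = (D : ℂ)⁻¹ * (if ν ∈ G₂ then (F μ ν : ℂ) else 0) := by
      intro ν; rw [hf]
      by_cases hν : ν ∈ G₂ <;> simp [hμ, hν]
    rw [Fintype.sum_congr _ _ this, ← Finset.mul_sum, sumRow μ hμ]
  have colf : ∀ ν ∈ G₂, ∑ μ : G, f μ ν
      = (D : ℂ)⁻¹ * (if ∀ μ ∈ G₁, F μ ν = 1 then (D : ℂ) else 0) := by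
    intro ν hν
    have : ∀ μ : G, f μ ν = (D : ℂ)⁻¹ * (if μ ∈ G₁ then (F μ ν : ℂ) else 0) := by
      intro μ; rw [hf]
      by_cases hμ : μ ∈ G₁ <;> simp [hμ, hν]
    rw [Fintype.sum_congr _ _ this, ← Finset.mul_sum, sumCol ν hν]
  constructor
  · rintro ⟨_, _, h3, h4⟩
    constructor
    · intro μ hμ htriv
      have h := h4 μ
      rw [rowf μ hμ, if_pos htriv, inv_mul_cancel₀ hD0] at h
      by_contra hne
      rw [if_neg hne] at h
      exact one_ne_zero h
    · intro ν hν htriv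
      have h := h3 ν
      rw [colf ν hν, if_pos htriv, inv_mul_cancel₀ hD0] at h
      by_contra hne
      rw [if_neg hne] at h
      exact one_ne_zero h
  · rintro ⟨hL, hR⟩
    refine ⟨?_, ?_, ?_, ?_⟩
    · -- (i)
      intro μ₁ μ₂ ν
      rw [pairSum (fun x y => f μ₁ x * f μ₂ y) ν]
      by_cases hμ₁ : μ₁ ∈ G₁
      · by_cases hμ₂ : μ₂ ∈ G₁
        · by_cases hν : ν ∈ G₂
          · have key : ∀ x : G, f μ₁ x * f μ₂ (ν - x)
                = (D : ℂ)⁻¹ * (D : ℂ)⁻¹ * (F μ₂ ν : ℂ)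
                  * (if x ∈ G₂ then (F (μ₁ - μ₂) x : ℂ) else 0) := by
              intro x
              rw [hf, hf]
              by_cases hx : x ∈ G₂
              · have hx' : ν - x ∈ G₂ := G₂.sub_mem hν hx
                rw [if_pos ⟨hμ₁, hx⟩, if_pos ⟨hμ₂, hx'⟩, if_pos hx]
                have e1 : F μ₁ x = F (μ₁ - μ₂) x * F μ₂ x := by
                  have := hF1 (μ₁ - μ₂) μ₂ x (G₁.sub_mem hμ₁ hμ₂) hμ₂ hx
                  rwa [sub_add_cancel] at this
                have e2 : F μ₂ ν = F μ₂ (ν - x) * F μ₂ x := by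
                  have := hF2 μ₂ (ν - x) x hμ₂ hx' hx
                  rwa [sub_add_cancel] at this
                have e1' : (F μ₁ x : ℂ) = (F (μ₁ - μ₂) x : ℂ) * (F μ₂ x : ℂ) := by
                  exact_mod_cast congrArg Units.val e1
                have e2' : (F μ₂ ν : ℂ) = (F μ₂ (ν - x) : ℂ) * (F μ₂ x : ℂ) := by
                  exact_mod_cast congrArg Units.val e2
                rw [e1', e2']; ring
              · have hx' : ν - x ∉ G₂ := fun hxx =>
                  hx (by simpa using G₂.sub_mem hν hxx)
                simp [hx, hx']
            rw [Fintype.sum_congr _ _ key, ← Finset.mul_sum,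
              sumRow (μ₁ - μ₂) (G₁.sub_mem hμ₁ hμ₂)]
            by_cases heq : μ₁ = μ₂
            · subst heq
              have htriv : ∀ x ∈ G₂, F (μ₁ - μ₁) x = 1 := by
                intro x hx; rw [sub_self]; exact hF0r x hx
              rw [if_pos htriv, if_pos rfl, hf, if_pos ⟨hμ₁, hν⟩]
              field_simp
            · have hne : μ₁ - μ₂ ≠ 0 := sub_ne_zero.mpr heq
              have : ¬ ∀ x ∈ G₂, F (μ₁ - μ₂) x = 1 := fun hh =>
                hne (hL _ (G₁.sub_mem hμ₁ hμ₂) hh)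
              rw [if_neg this, if_neg heq, mul_zero]
          · have key : ∀ x : G, f μ₁ x * f μ₂ (ν - x) = 0 := by
              intro x; rw [hf, hf]
              by_cases hx : x ∈ G₂
              · have : ν - x ∉ G₂ := by
                  intro hxx
                  exact hν (by simpa using G₂.add_mem hxx hx)
                simp [this]
              · simp [hx]
            rw [Fintype.sum_congr _ _ key]
            simp [hf, hν]
        · have hne : μ₁ ≠ μ₂ := fun h => hμ₂ (h ▸ hμ₁)
          have key : ∀ x : G, f μ₁ x * f μ₂ (ν - x) = 0 := by
            intro x; rw [hf, hf]; simp [hμ₂]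
          rw [Fintype.sum_congr _ _ key]
          simp [hne]
      · have key : ∀ x : G, f μ₁ x * f μ₂ (ν - x) = 0 := by
          intro x; rw [hf, hf]; simp [hμ₁]
        rw [Fintype.sum_congr _ _ key]
        simp [hf, hμ₁]
    · -- (ii)
      intro ν₁ ν₂ μ
      rw [pairSum (fun x y => f x ν₁ * f y ν₂) μ]
      by_cases hν₁ : ν₁ ∈ G₂
      · by_cases hν₂ : ν₂ ∈ G₂
        · by_cases hμ : μ ∈ G₁
          · have key : ∀ x : G, f x ν₁ * f (μ - x) ν₂
                = (D : ℂ)⁻¹ * (D : ℂ)⁻¹ * (F μ ν₂ : ℂ)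
                  * (if x ∈ G₁ then (F x (ν₁ - ν₂) : ℂ) else 0) := by
              intro x
              rw [hf, hf]
              by_cases hx : x ∈ G₁
              · have hx' : μ - x ∈ G₁ := G₁.sub_mem hμ hx
                rw [if_pos ⟨hx, hν₁⟩, if_pos ⟨hx', hν₂⟩, if_pos hx]
                have e1 : F x ν₁ = F x (ν₁ - ν₂) * F x ν₂ := by
                  have := hF2 x (ν₁ - ν₂) ν₂ hx (G₂.sub_mem hν₁ hν₂) hν₂
                  rwa [sub_add_cancel] at this
                have e2 : F μ ν₂ = F (μ - x) ν₂ * F x ν₂ := by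
                  have := hF1 (μ - x) x ν₂ hx' hx hν₂
                  rwa [sub_add_cancel] at this
                have e1' : (F x ν₁ : ℂ) = (F x (ν₁ - ν₂) : ℂ) * (F x ν₂ : ℂ) := by
                  exact_mod_cast congrArg Units.val e1
                have e2' : (F μ ν₂ : ℂ) = (F (μ - x) ν₂ : ℂ) * (F x ν₂ : ℂ) := by
                  exact_mod_cast congrArg Units.val e2
                rw [e1', e2']; ring
              · have hx' : μ - x ∉ G₁ := fun hxx =>
                  hx (by simpa using G₁.sub_mem hμ hxx)
                simp [hx, hx']
            rw [Fintype.sum_congr _ _ key, ← Finset.mul_sum]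
            have sc : ∑ x : G, (if x ∈ G₁ then (F x (ν₁ - ν₂) : ℂ) else 0)
                = if ∀ x ∈ G₁, F x (ν₁ - ν₂) = 1 then (D : ℂ) else 0 :=
              sumCol (ν₁ - ν₂) (G₂.sub_mem hν₁ hν₂)
            rw [sc]
            by_cases heq : ν₁ = ν₂
            · subst heq
              have htriv : ∀ x ∈ G₁, F x (ν₁ - ν₁) = 1 := by
                intro x hx; rw [sub_self]; exact hF0l x hx
              rw [if_pos htriv, if_pos rfl, hf, if_pos ⟨hμ, hν₁⟩]
              field_simp
            · have hne : ν₁ - ν₂ ≠ 0 := sub_ne_zero.mpr heq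
              have : ¬ ∀ x ∈ G₁, F x (ν₁ - ν₂) = 1 := fun hh =>
                hne (hR _ (G₂.sub_mem hν₁ hν₂) hh)
              rw [if_neg this, if_neg heq, mul_zero]
          · have key : ∀ x : G, f x ν₁ * f (μ - x) ν₂ = 0 := by
              intro x; rw [hf, hf]
              by_cases hx : x ∈ G₁
              · have : μ - x ∉ G₁ := by
                  intro hxx
                  exact hμ (by simpa using G₁.add_mem hxx hx)
                simp [this]
              · simp [hx]
            rw [Fintype.sum_congr _ _ key]
            simp [hf, hμ]
        · have hne : ν₁ ≠ ν₂ := fun h => hν₂ (h ▸ hν₁)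
          have key : ∀ x : G, f x ν₁ * f (μ - x) ν₂ = 0 := by
            intro x; rw [hf, hf]; simp [hν₂]
          rw [Fintype.sum_congr _ _ key]
          simp [hne]
      · have key : ∀ x : G, f x ν₁ * f (μ - x) ν₂ = 0 := by
          intro x; rw [hf, hf]; simp [hν₁]
        rw [Fintype.sum_congr _ _ key]
        simp [hf, hν₁]
    · -- (iii)
      intro ν
      by_cases hν : ν ∈ G₂
      · rw [colf ν hν]
        by_cases hν0 : ν = 0
        · subst hν0
          have htriv : ∀ μ ∈ G₁, F μ 0 = 1 := hF0l
          rw [if_pos htriv, if_pos rfl, inv_mul_cancel₀ hD0]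
        · have : ¬ ∀ μ ∈ G₁, F μ ν = 1 := fun hh => hν0 (hR ν hν hh)
          rw [if_neg this, if_neg hν0, mul_zero]
      · have hν0 : ν ≠ 0 := fun h => hν (h ▸ G₂.zero_mem)
        have : ∀ μ : G, f μ ν = 0 := by intro μ; rw [hf]; simp [hν]
        rw [Fintype.sum_congr _ _ this]
        simp [hν0]
    · -- (iv)
      intro μ
      by_cases hμ : μ ∈ G₁
      · rw [rowf μ hμ]
        by_cases hμ0 : μ = 0
        · subst hμ0
          have htriv : ∀ ν ∈ G₂, F 0 ν = 1 := hF0r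
          rw [if_pos htriv, if_pos rfl, inv_mul_cancel₀ hD0]
        · have : ¬ ∀ ν ∈ G₂, F μ ν = 1 := fun hh => hμ0 (hL μ hμ hh)
          rw [if_neg this, if_neg hμ0, mul_zero]
      · have hμ0 : μ ≠ 0 := fun h => hμ (h ▸ G₁.zero_mem)
        have : ∀ ν : G, f μ ν = 0 := by intro ν; rw [hf]; simp [hμ]
        rw [Fintype.sum_congr _ _ this]
        simp [hμ0]
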